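/- Suppose k = 2 and let γ ≥ 1. For a profile s ∈ [2]^n and agent i, let s⊕i be the profile obtained by flipping agent i's signal. Define the constrained agents C(s) = {i ∈ [n] : (s_i, (s⊕i)_i) ∈ σ_i(s_{-i})}, the acceptable agents A_γ(s) = {i ∈ [n] : ρ_i(s) ≥ 1/γ}, and the must-match profiles M_γ = {s ∈ [2]^n : A_γ(s) ⊆ C(s)}. Let G_γ be the undirected graph on vertex set [2]^n with an edge between s and s⊕i whenever s ∈ M_γ, (s_i, (s⊕i)_i) ∈ σ_i(s_{-i}), and i ∈ A_γ(s) ∩ A_γ(s⊕i). Then there exists a deterministic allocation rule x ∈ T_D(σ) with R(ρ,x) ≤ γ if and only if G_γ contains a matching (a set of pairwise vertex-disjoint edges) of cardinality |M_γ|. -/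
import Mathlib


namespace Stmt11

variable {n : ℕ}

/-- Induced performance ratio. -/
noncomputable def rho [NeZero n] (v : Fin n → (Fin n → Fin 2) → ℝ) (i : Fin n)
    (s : Fin n → Fin 2) : ℝ :=
  v i s / Finset.univ.sup' Finset.univ_nonempty (fun j => v j s)

/-- The profile `s ⊕ i` obtained by flipping agent `i`'s (binary) signal. -/
def flipAt (s : Fin n → Fin 2) (i : Fin n) : Fin n → Fin 2 :=
  Function.update s i (s i + 1)

/-- `i` is constrained at `s`: `(s_i, (s⊕i)_i) ∈ σ_i(s_{-i})`. -/
def Constrained (v : Fin n → (Fin n → Fin 2) → ℝ) (s : Fin n → Fin 2) (i : Fin n) : Prop :=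
  v i s < v i (flipAt s i)

/-- `i` is acceptable at `s` for ratio `γ`. -/
def Acceptable [NeZero n] (v : Fin n → (Fin n → Fin 2) → ℝ) (γ : ℝ)
    (s : Fin n → Fin 2) (i : Fin n) : Prop :=
  1 / γ ≤ rho v i s

/-- `s` is a must-match profile: all acceptable agents are constrained. -/
def MustMatch [NeZero n] (v : Fin n → (Fin n → Fin 2) → ℝ) (γ : ℝ)
    (s : Fin n → Fin 2) : Prop :=
  ∀ i, Acceptable v γ s i → Constrained v s i

/-- Directed version of the edge condition of `G_γ`, going out of the must-match profile. -/
def EdgeCond [NeZero n] (v : Fin n → (Fin n → Fin 2) → ℝ) (γ : ℝ)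
    (s s' : Fin n → Fin 2) : Prop :=
  ∃ i, s' = flipAt s i ∧ MustMatch v γ s ∧ v i s < v i s' ∧
    Acceptable v γ s i ∧ Acceptable v γ s' i

/-- Membership in the truthful polytope `T(σ)` for the orderings induced by `v`. -/
def InT (v x : Fin n → (Fin n → Fin 2) → ℝ) : Prop :=
  (∀ i s, 0 ≤ x i s ∧ x i s ≤ 1) ∧ (∀ s, ∑ i, x i s = 1) ∧
  (∀ (i : Fin n) (s : Fin n → Fin 2) (a b : Fin 2),
    v i (Function.update s i a) < v i (Function.update s i b) →
    x i (Function.update s i a) ≤ x i (Function.update s i b))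

/- ## Auxiliary lemmas -/

lemma fin2_eq_add_one {a b : Fin 2} (h : a ≠ b) : b = a + 1 := by revert a b; decide

lemma flipAt_flipAt (s : Fin n → Fin 2) (i : Fin n) : flipAt (flipAt s i) i = s := by
  funext j
  by_cases h : j = i
  · subst h
    simp only [flipAt, Function.update_self]
    exact (by decide : ∀ a : Fin 2, a + 1 + 1 = a) (s j)
  · simp [flipAt, Function.update_of_ne h]

lemma flipAt_ne (s : Fin n → Fin 2) (i : Fin n) : flipAt s i ≠ s := by
  intro h
  have := congrFun h i
  simp only [flipAt, Function.update_self] at this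
  exact (by decide : ∀ a : Fin 2, ¬ (a + 1 = a)) (s i) this

lemma flipAt_inj {s t : Fin n → Fin 2} {i : Fin n} (h : flipAt s i = flipAt t i) : s = t := by
  rw [← flipAt_flipAt s i, h, flipAt_flipAt]

lemma flipAt_update (s : Fin n → Fin 2) (i : Fin n) (a : Fin 2) :
    flipAt (Function.update s i a) i = Function.update s i (a + 1) := by
  simp [flipAt, Function.update_idem]

lemma rho_pos [NeZero n] (v : Fin n → (Fin n → Fin 2) → ℝ) (hv : ∀ i s, 0 < v i s)
    (i : Fin n) (s : Fin n → Fin 2) : 0 < rho v i s := by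
  apply div_pos (hv i s)
  exact lt_of_lt_of_le (hv i s) (Finset.le_sup' (fun j => v j s) (Finset.mem_univ i))

lemma acc_iff [NeZero n] (v : Fin n → (Fin n → Fin 2) → ℝ) (hv : ∀ i s, 0 < v i s)
    {γ : ℝ} (hγ : 1 ≤ γ) (i : Fin n) (s : Fin n → Fin 2) :
    1 / γ ≤ rho v i s ↔ 1 / rho v i s ≤ γ :=
  one_div_le (lt_of_lt_of_le one_pos hγ) (rho_pos v hv i s)

/-- `k = 2`: there is a deterministic truthful allocation rule of ratio at
most `γ` iff the graph `G_γ` contains a matching of cardinality `|M_γ|`. -/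
theorem stmt11 [NeZero n] (γ : ℝ) (hγ : 1 ≤ γ)
    (v : Fin n → (Fin n → Fin 2) → ℝ) (hv : ∀ i s, 0 < v i s) :
    (∃ x : Fin n → (Fin n → Fin 2) → ℝ, InT v x ∧ (∀ i s, x i s = 0 ∨ x i s = 1) ∧
      Finset.univ.sup' Finset.univ_nonempty
        (fun s : Fin n → Fin 2 => ∑ i, x i s / rho v i s) ≤ γ) ↔
    (∃ F : Finset ((Fin n → Fin 2) × (Fin n → Fin 2)),
      (∀ p ∈ F, EdgeCond v γ p.1 p.2 ∨ EdgeCond v γ p.2 p.1) ∧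
      (∀ p ∈ F, ∀ q ∈ F, p ≠ q →
        p.1 ≠ q.1 ∧ p.1 ≠ q.2 ∧ p.2 ≠ q.1 ∧ p.2 ≠ q.2) ∧
      F.card = {s : Fin n → Fin 2 | MustMatch v γ s}.ncard) := by
  classical
  constructor
  · rintro ⟨x, ⟨hx01, hxsum, hmono⟩, hdet, hsup⟩
    -- extract the winner function
    have hw : ∀ s : Fin n → Fin 2, ∃ i, x i s = 1 ∧ ∀ j, x j s = 1 → j = i := by
      intro s
      have hcard : (Finset.univ.filter (fun i => x i s = 1)).card = 1 := by
        have h1 : ((Finset.univ.filter (fun i => x i s = 1)).card : ℝ) = ∑ i, x i s := by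
          rw [Finset.card_filter]
          push_cast
          refine (Finset.sum_congr rfl fun i _ => ?_)
          rcases hdet i s with h | h <;> simp [h]
        rw [hxsum s] at h1
        exact_mod_cast h1
      obtain ⟨i, hi⟩ := Finset.card_eq_one.mp hcard
      refine ⟨i, ?_, ?_⟩
      · have : i ∈ Finset.univ.filter (fun i => x i s = 1) := hi ▸ Finset.mem_singleton_self i
        exact (Finset.mem_filter.mp this).2
      · intro j hj
        have : j ∈ Finset.univ.filter (fun i => x i s = 1) :=
          Finset.mem_filter.mpr ⟨Finset.mem_univ j, hj⟩
        rwa [hi, Finset.mem_singleton] at this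
    choose W hW1 hW2 using hw
    have hW0 : ∀ s j, j ≠ W s → x j s = 0 := by
      intro s j hj
      rcases hdet j s with h | h
      · exact h
      · exact absurd (hW2 s j h) hj
    have hsumx : ∀ s, ∑ i, x i s / rho v i s = 1 / rho v (W s) s := by
      intro s
      rw [Finset.sum_eq_single (W s)]
      · rw [hW1 s]
      · intro j _ hj; rw [hW0 s j hj, zero_div]
      · intro h; exact absurd (Finset.mem_univ _) h
    have hacc : ∀ s, Acceptable v γ s (W s) := by
      intro s
      have h1 : ∑ i, x i s / rho v i s ≤ γ :=
        le_trans (Finset.le_sup' (fun s => ∑ i, x i s / rho v i s) (Finset.mem_univ s)) hsup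
      rw [hsumx s] at h1
      exact (acc_iff v hv hγ (W s) s).mpr h1
    have htr : ∀ (s : Fin n → Fin 2) (i : Fin n), x i s = 1 → v i s < v i (flipAt s i) →
        x i (flipAt s i) = 1 := by
      intro s i h1 hlt
      have hm := hmono i s (s i) (s i + 1) (by rw [Function.update_eq_self]; exact hlt)
      rw [Function.update_eq_self] at hm
      have hm' : x i s ≤ x i (flipAt s i) := hm
      rcases hdet i (flipAt s i) with h | h
      · exfalso; rw [h1, h] at hm'; linarith
      · exact h
    have hconstr : ∀ s, MustMatch v γ s → v (W s) s < v (W s) (flipAt s (W s)) :=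
      fun s hM => hM (W s) (hacc s)
    have hWt : ∀ s, MustMatch v γ s → W (flipAt s (W s)) = W s := by
      intro s hM
      exact (hW2 _ _ (htr s (W s) (hW1 s) (hconstr s hM))).symm
    have hkey : ∀ s t, MustMatch v γ s → MustMatch v γ t → s ≠ flipAt t (W t) := by
      intro s t hMs hMt h
      have hws : W s = W t := by rw [h, hWt t hMt]
      have h1 : v (W s) s < v (W s) (flipAt s (W s)) := hconstr s hMs
      have h2 : v (W t) t < v (W t) (flipAt t (W t)) := hconstr t hMt
      rw [hws, h, flipAt_flipAt] at h1
      exact absurd h2 (lt_asymm h1)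
    have hfin : ({s : Fin n → Fin 2 | MustMatch v γ s}).Finite := Set.toFinite _
    refine ⟨hfin.toFinset.image (fun s => (s, flipAt s (W s))), ?_, ?_, ?_⟩
    · rintro p hp
      rw [Finset.mem_image] at hp
      obtain ⟨s, hs, rfl⟩ := hp
      rw [Set.Finite.mem_toFinset] at hs
      left
      have hacc' : Acceptable v γ (flipAt s (W s)) (W s) := by
        have h := hacc (flipAt s (W s))
        rwa [hWt s hs] at h
      exact ⟨W s, rfl, hs, hconstr s hs, hacc s, hacc'⟩
    · rintro p hp q hq hpq
      rw [Finset.mem_image] at hp hq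
      obtain ⟨s, hs, rfl⟩ := hp
      obtain ⟨t, ht, rfl⟩ := hq
      rw [Set.Finite.mem_toFinset] at hs ht
      have hst : s ≠ t := fun h => hpq (by rw [h])
      refine ⟨hst, hkey s t hs ht, ?_, ?_⟩
      · intro h
        exact hkey t s ht hs h.symm
      · intro h
        replace h : flipAt s (W s) = flipAt t (W t) := h
        have h1 : W (flipAt s (W s)) = W s := hWt s hs
        have h2 : W (flipAt t (W t)) = W t := hWt t ht
        rw [h] at h1
        have hww : W t = W s := by rw [← h2, h1]
        apply hst
        apply flipAt_inj (i := W s)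
        rw [h, hww]
    · rw [Finset.card_image_of_injective _ (fun a b h => congrArg Prod.fst h),
        Set.ncard_eq_toFinset_card _ hfin]
  · rintro ⟨F, hF, hd, hcard⟩
    -- orient every edge out of its must-match source
    set src : (Fin n → Fin 2) × (Fin n → Fin 2) → (Fin n → Fin 2) :=
      fun p => if EdgeCond v γ p.1 p.2 then p.1 else p.2 with hsrcdef
    set pt : (Fin n → Fin 2) × (Fin n → Fin 2) → (Fin n → Fin 2) :=
      fun p => if EdgeCond v γ p.1 p.2 then p.2 else p.1 with hptdef
    have hE : ∀ p ∈ F, EdgeCond v γ (src p) (pt p) := by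
      intro p hp
      by_cases h : EdgeCond v γ p.1 p.2
      · simp only [hsrcdef, hptdef, if_pos h]; exact h
      · simp only [hsrcdef, hptdef, if_neg h]
        exact (hF p hp).resolve_left h
    have hsrc_mem : ∀ p, src p = p.1 ∨ src p = p.2 := by
      intro p; by_cases h : EdgeCond v γ p.1 p.2 <;> simp [hsrcdef, h]
    have hpt_mem : ∀ p, pt p = p.1 ∨ pt p = p.2 := by
      intro p; by_cases h : EdgeCond v γ p.1 p.2 <;> simp [hptdef, h]
    have hvert : ∀ p ∈ F, ∀ q ∈ F, ∀ a : Fin n → Fin 2,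
        (a = p.1 ∨ a = p.2) → (a = q.1 ∨ a = q.2) → p = q := by
      intro p hp q hq a hap haq
      by_contra hpq
      obtain ⟨h1, h2, h3, h4⟩ := hd p hp q hq hpq
      rcases hap with rfl | rfl <;> rcases haq with h | h
      · exact h1 h
      · exact h2 h
      · exact h3 h
      · exact h4 h
    have hMM : ∀ p ∈ F, MustMatch v γ (src p) := fun p hp => (hE p hp).choose_spec.2.1
    have hfin : ({s : Fin n → Fin 2 | MustMatch v γ s}).Finite := Set.toFinite _
    have hinj : Set.InjOn src F := fun p hp q hq hsq =>
      hvert p hp q hq (src p) (hsrc_mem p)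
        ((hsrc_mem q).imp (fun h => hsq.trans h) (fun h => hsq.trans h))
    have himg : F.image src = hfin.toFinset := by
      apply Finset.eq_of_subset_of_card_le
      · intro m hm
        rw [Finset.mem_image] at hm
        obtain ⟨p, hp, rfl⟩ := hm
        rw [Set.Finite.mem_toFinset]
        exact hMM p hp
      · apply le_of_eq
        rw [Finset.card_image_of_injOn hinj, hcard, Set.ncard_eq_toFinset_card _ hfin]
    have h3 : ∀ m, MustMatch v γ m → ∃ p, p ∈ F ∧ src p = m := by
      intro m hm
      have hmem : m ∈ F.image src := by
        rw [himg, Set.Finite.mem_toFinset]; exact hm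
      simpa [Finset.mem_image] using hmem
    choose wit hwit using hE
    choose ep hep1 hep2 using h3
    have h4 : ∀ t : Fin n → Fin 2, (∃ p, p ∈ F ∧ pt p = t) → ∃ p, p ∈ F ∧ pt p = t :=
      fun _ h => h
    choose pp hpp1 hpp2 using h4
    have hfreeE : ∀ t, ¬ MustMatch v γ t → ∃ i, Acceptable v γ t i ∧ ¬ Constrained v t i := by
      intro t ht
      rw [MustMatch] at ht
      push_neg at ht
      exact ht
    choose fr hfr1 hfr2 using hfreeE
    -- the winner function
    obtain ⟨W, hWacc, hWT⟩ :
        ∃ W : (Fin n → Fin 2) → Fin n,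
          (∀ t, Acceptable v γ t (W t)) ∧
          (∀ t, v (W t) t < v (W t) (flipAt t (W t)) → W (flipAt t (W t)) = W t) := by
      refine ⟨fun t =>
        if ht : MustMatch v γ t then wit (ep t ht) (hep1 t ht)
        else if hp : ∃ p, p ∈ F ∧ pt p = t then wit (pp t hp) (hpp1 t hp)
        else fr t ht, fun t => ?_, fun t hlt => ?_⟩
      · beta_reduce
        by_cases ht : MustMatch v γ t
        · rw [dif_pos ht]
          have h := (hwit (ep t ht) (hep1 t ht)).2.2.2.1
          rwa [hep2 t ht] at h
        · rw [dif_neg ht]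
          by_cases hp : ∃ p, p ∈ F ∧ pt p = t
          · rw [dif_pos hp]
            have h := (hwit (pp t hp) (hpp1 t hp)).2.2.2.2
            rwa [hpp2 t hp] at h
          · rw [dif_neg hp]
            exact hfr1 t ht
      · beta_reduce at hlt ⊢
        by_cases ht : MustMatch v γ t
        · rw [dif_pos ht] at hlt ⊢
          have hpF : ep t ht ∈ F := hep1 t ht
          have hspec := hwit (ep t ht) hpF
          have hsrcp : src (ep t ht) = t := hep2 t ht
          have hflip : flipAt t (wit (ep t ht) hpF) = pt (ep t ht) := by
            rw [hspec.1, hsrcp]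
          have hptM : ¬ MustMatch v γ (pt (ep t ht)) := by
            intro hM
            have hq1 := hep1 (pt (ep t ht)) hM
            have hq2 := hep2 (pt (ep t ht)) hM
            have hpe : ep (pt (ep t ht)) hM = ep t ht :=
              hvert _ hq1 _ hpF (pt (ep t ht))
                ((hsrc_mem _).imp (fun h => hq2.symm.trans h) (fun h => hq2.symm.trans h))
                (hpt_mem _)
            have hteq : t = pt (ep t ht) :=
              hsrcp.symm.trans ((congrArg src hpe.symm).trans hq2)
            exact flipAt_ne t (wit (ep t ht) hpF) (by rw [hflip, ← hteq])
          rw [hflip, dif_neg hptM]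
          have hpex : ∃ p, p ∈ F ∧ pt p = pt (ep t ht) := ⟨ep t ht, hpF, rfl⟩
          rw [dif_pos hpex]
          have hqe : pp (pt (ep t ht)) hpex = ep t ht :=
            hvert _ (hpp1 _ hpex) _ hpF (pt (ep t ht))
              ((hpt_mem _).imp (fun h => (hpp2 _ hpex).symm.trans h)
                (fun h => (hpp2 _ hpex).symm.trans h))
              (hpt_mem _)
          simp only [hqe]
        · rw [dif_neg ht] at hlt ⊢
          by_cases hp : ∃ p, p ∈ F ∧ pt p = t
          · exfalso
            rw [dif_pos hp] at hlt
            set q0 := pp t hp with hq0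
            set i0 := wit (pp t hp) (hpp1 t hp) with hi0
            have hspec := hwit (pp t hp) (hpp1 t hp)
            have h1 := hspec.1
            rw [hpp2 t hp] at h1
            have h2 : flipAt t i0 = src q0 := by
              rw [h1, flipAt_flipAt]
            rw [h2] at hlt
            have h5 := hspec.2.2.1
            rw [hpp2 t hp] at h5
            exact absurd h5 (lt_asymm hlt)
          · rw [dif_neg hp] at hlt
            exact absurd hlt (hfr2 t ht)
    -- the allocation rule
    refine ⟨fun i s => if i = W s then 1 else 0, ⟨?_, ?_, ?_⟩, ?_, ?_⟩
    · intro i s; by_cases h : i = W s <;> simp [h]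
    · intro s; simp
    · intro i s a b hab
      by_cases hba : a = b
      · subst hba; exact absurd hab (lt_irrefl _)
      · have hb : b = a + 1 := fin2_eq_add_one hba
        subst hb
        rw [← flipAt_update s i a] at hab ⊢
        beta_reduce
        by_cases hwu : i = W (Function.update s i a)
        · have h2 : W (flipAt (Function.update s i a) (W (Function.update s i a)))
              = W (Function.update s i a) := hWT _ (by rw [← hwu]; exact hab)
          rw [← hwu] at h2
          rw [if_pos hwu, if_pos h2.symm]
        · rw [if_neg hwu]
          by_cases h : i = W (flipAt (Function.update s i a) i)
          · rw [if_pos h]; exact zero_le_one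
          · rw [if_neg h]
    · intro i s; by_cases h : i = W s <;> simp [h]
    · apply Finset.sup'_le
      intro s _
      have hsum : ∑ i, (if i = W s then (1:ℝ) else 0) / rho v i s = 1 / rho v (W s) s := by
        rw [Finset.sum_eq_single (W s)]
        · rw [if_pos rfl]
        · intro j _ hj; rw [if_neg hj, zero_div]
        · intro h; exact absurd (Finset.mem_univ _) h
      rw [hsum]
      exact (acc_iff v hv hγ (W s) s).mp (hWacc s)

end Stmt11
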